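/- Let R be an entangled pure state on ℂ^d ⊗ ℂ^d represented by a d×d matrix R (double-ket form), and suppose rank-1 families {A_a}_{a∈X}, {B_b}_{b∈Y} of d×d matrices form POVMs (Σ_a |A_a⟩⟩⟨⟨A_a| = I, Σ_b |B_b⟩⟩⟨⟨B_b| = I), are pairwise non-proportional, and satisfy A_a R* B_b ∝ M_{f(a,b)} for a rank-1 non-redundant PVM {|Mᵢ⟩⟩⟨⟨Mᵢ|}_{i=1,…,d²} on ℂ^d ⊗ ℂ^d containing at least one full-rank element M₁. Then: |X| = |Y| = d², all Mᵢ, A_a, B_b are invertible, and the pattern function f : X × Y → [d²] is a Latin square (injective in each argument). -/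

import Mathlib

open Matrix

noncomputable section

/-- The rank-1 operator `|M⟩⟩⟨⟨M|` on `ℂ^d ⊗ ℂ^d` associated with a `d×d` matrix `M`,
where `|M⟩⟩ = (I ⊗ M) Σᵢ |i⟩⊗|i⟩` has coefficient `M s t` at the product-basis index `(s,t)`. -/
def dop {d : ℕ} (M : Matrix (Fin d) (Fin d) ℂ) :
    Matrix (Fin d × Fin d) (Fin d × Fin d) ℂ :=
  Matrix.of fun p q => M p.1 p.2 * star (M q.1 q.2)

section LocuHelpers
variable {d : ℕ}

abbrev locu_Mat (d : ℕ) := Matrix (Fin d) (Fin d) ℂ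

lemma locu_tr_form (C D : locu_Mat d) :
    (Cᴴ * D).trace = ∑ p : Fin d × Fin d, star (C p.1 p.2) * D p.1 p.2 := by
  rw [Matrix.trace, Fintype.sum_prod_type]
  simp only [Matrix.diag, Matrix.mul_apply, Matrix.conjTranspose_apply]
  exact Finset.sum_comm

lemma locu_norm_zero {C : locu_Mat d} (h : (Cᴴ * C).trace = 0) : C = 0 := by
  rw [locu_tr_form] at h
  have h' : ∀ p : Fin d × Fin d, star (C p.1 p.2) * C p.1 p.2 = (Complex.normSq (C p.1 p.2) : ℂ) := by
    intro p; rw [Complex.normSq_eq_conj_mul_self]; rfl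
  simp only [h'] at h
  rw [← Complex.ofReal_sum] at h
  have h2 : ∑ p : Fin d × Fin d, Complex.normSq (C p.1 p.2) = 0 := by exact_mod_cast h
  have h3 := (Finset.sum_eq_zero_iff_of_nonneg (fun p _ => Complex.normSq_nonneg _)).mp h2
  ext i j
  have := h3 (i, j) (Finset.mem_univ _)
  simpa using Complex.normSq_eq_zero.mp this

lemma locu_frame_apply {ι : Type*} [Fintype ι] {V : ι → locu_Mat d} (h : ∑ a, dop (V a) = 1)
    (p q : Fin d × Fin d) :
    ∑ a, V a p.1 p.2 * star (V a q.1 q.2) = if p = q then 1 else 0 := by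
  have h' := congrArg (fun m => m p q) h
  simpa [dop, Matrix.sum_apply, Matrix.one_apply] using h'

lemma locu_parseval {ι : Type*} [Fintype ι] {V : ι → locu_Mat d} (h : ∑ a, dop (V a) = 1)
    (C D : locu_Mat d) :
    ∑ a, (Cᴴ * V a).trace * ((V a)ᴴ * D).trace = (Cᴴ * D).trace := by
  simp only [locu_tr_form]
  have step1 : ∀ a : ι, (∑ p : Fin d × Fin d, star (C p.1 p.2) * V a p.1 p.2) *
      (∑ q : Fin d × Fin d, star (V a q.1 q.2) * D q.1 q.2)
      = ∑ p : Fin d × Fin d, ∑ q : Fin d × Fin d,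
          (star (C p.1 p.2) * D q.1 q.2) * (V a p.1 p.2 * star (V a q.1 q.2)) := by
    intro a
    rw [Finset.sum_mul_sum]
    exact Finset.sum_congr rfl fun p _ => Finset.sum_congr rfl fun q _ => by ring
  simp only [step1]
  rw [Finset.sum_comm]
  refine Finset.sum_congr rfl fun p _ => ?_
  rw [Finset.sum_comm]
  have : ∀ q : Fin d × Fin d, (∑ a, star (C p.1 p.2) * D q.1 q.2 * (V a p.1 p.2 * star (V a q.1 q.2)))
      = star (C p.1 p.2) * D q.1 q.2 * (if p = q then 1 else 0) := by
    intro q; rw [← Finset.mul_sum, locu_frame_apply h]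
  simp only [this, mul_ite, mul_one, mul_zero]
  simp [Finset.sum_ite_eq]

lemma locu_reconstruct {ι : Type*} [Fintype ι] {V : ι → locu_Mat d} (h : ∑ a, dop (V a) = 1)
    (C : locu_Mat d) : ∑ a, ((V a)ᴴ * C).trace • V a = C := by
  ext i j
  simp only [Matrix.sum_apply, Matrix.smul_apply, locu_tr_form, smul_eq_mul]
  have : ∀ a : ι, (∑ q : Fin d × Fin d, star (V a q.1 q.2) * C q.1 q.2) * V a i j
      = ∑ q : Fin d × Fin d, C q.1 q.2 * (V a (i, j).1 (i, j).2 * star (V a q.1 q.2)) := by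
    intro a
    rw [Finset.sum_mul]
    exact Finset.sum_congr rfl fun q _ => by ring
  simp only [this]
  rw [Finset.sum_comm]
  have : ∀ q : Fin d × Fin d, (∑ a, C q.1 q.2 * (V a (i, j).1 (i, j).2 * star (V a q.1 q.2)))
      = C q.1 q.2 * (if ((i, j) : Fin d × Fin d) = q then 1 else 0) := by
    intro q
    rw [← Finset.mul_sum, locu_frame_apply h]
  simp only [this, mul_ite, mul_one, mul_zero]
  simp [Finset.sum_ite_eq']

lemma locu_channel {ι : Type*} [Fintype ι] {V : ι → locu_Mat d} (h : ∑ a, dop (V a) = 1)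
    (Y : locu_Mat d) : ∑ a, V a * Y * (V a)ᴴ = Y.trace • 1 := by
  ext s s'
  simp only [Matrix.sum_apply, Matrix.mul_apply, Matrix.conjTranspose_apply]
  have : ∀ a : ι, (∑ t', (∑ t, V a s t * Y t t') * star (V a s' t'))
      = ∑ t', ∑ t, Y t t' * (V a (s, t).1 (s, t).2 * star (V a (s', t').1 (s', t').2)) := by
    intro a
    exact Finset.sum_congr rfl fun t' _ => by rw [Finset.sum_mul]; exact Finset.sum_congr rfl fun t _ => by ring
  simp only [this]
  rw [Finset.sum_comm]
  have : ∀ t', (∑ a, ∑ t, Y t t' * (V a (s, t).1 (s, t).2 * star (V a (s', t').1 (s', t').2)))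
      = ∑ t, Y t t' * (if ((s, t) : Fin d × Fin d) = (s', t') then 1 else 0) := by
    intro t'
    rw [Finset.sum_comm]
    exact Finset.sum_congr rfl fun t _ => by rw [← Finset.mul_sum, locu_frame_apply h]
  simp only [this, Prod.mk.injEq, mul_ite, mul_one, mul_zero]
  by_cases hss : s = s'
  · subst hss
    simp [Matrix.smul_apply, Matrix.one_apply, Matrix.trace, Matrix.diag, Finset.sum_ite_eq']
  · simp [hss, Matrix.one_apply, Matrix.smul_apply]



lemma locu_completeness (M : Fin (d ^ 2) → locu_Mat d)
    (horth : ∀ i j, ((M i)ᴴ * M j).trace = if i = j then 1 else 0) :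
    ∑ i, dop (M i) = 1 := by
  have hcard : Fintype.card (Fin d × Fin d) = Fintype.card (Fin (d ^ 2)) := by
    simp [sq]
  let e : Fin d × Fin d ≃ Fin (d ^ 2) := Fintype.equivOfCardEq hcard
  let U : Matrix (Fin (d ^ 2)) (Fin (d ^ 2)) ℂ :=
    Matrix.of fun p i => M i (e.symm p).1 (e.symm p).2
  have hUU : Uᴴ * U = 1 := by
    ext i j
    have := horth i j
    rw [locu_tr_form] at this
    simp only [Matrix.mul_apply, Matrix.conjTranspose_apply, Matrix.one_apply, U, Matrix.of_apply]
    rw [← this]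
    exact (Equiv.sum_comp e.symm fun p => star (M i p.1 p.2) * M j p.1 p.2)
  have hUU' : U * Uᴴ = 1 := mul_eq_one_comm.mp hUU
  ext p q
  have := congrArg (fun m => m (e p) (e q)) hUU'
  simp only [Matrix.mul_apply, Matrix.conjTranspose_apply, Matrix.one_apply, U, Matrix.of_apply,
    Equiv.symm_apply_apply, EmbeddingLike.apply_eq_iff_eq] at this
  simpa [dop, Matrix.sum_apply, Matrix.one_apply] using this

lemma locu_isUnit_of_smul_unit {c : ℂ} {N G : locu_Mat d} (hc : c ≠ 0) (h : G = c • N) (hN : IsUnit N) :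
    IsUnit G := by
  rw [Matrix.isUnit_iff_isUnit_det, h, Matrix.det_smul, isUnit_iff_ne_zero]
  exact mul_ne_zero (pow_ne_zero _ hc) ((Matrix.isUnit_iff_isUnit_det (N)).mp hN).ne_zero

lemma locu_unit_of_smul (hd : 0 < d) {c : ℂ} {N G : locu_Mat d} (h : G = c • N) (hG : IsUnit G) :
    IsUnit N ∧ c ≠ 0 := by
  have : Nonempty (Fin d) := ⟨⟨0, hd⟩⟩
  have hdet := ((Matrix.isUnit_iff_isUnit_det G).mp hG).ne_zero
  have hc : c ≠ 0 := by
    rintro rfl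
    rw [zero_smul] at h
    rw [h, Matrix.det_zero] at hdet
    exact hdet rfl
  refine ⟨?_, hc⟩
  rw [Matrix.isUnit_iff_isUnit_det, isUnit_iff_ne_zero]
  rw [h, Matrix.det_smul] at hdet
  exact fun h0 => hdet (by rw [h0, mul_zero])

lemma locu_key (M : Fin (d ^ 2) → locu_Mat d)
    (horth : ∀ i j, ((M i)ᴴ * M j).trace = if i = j then 1 else 0)
    (G : locu_Mat d)
    (k : Fin (d ^ 2) → Fin (d ^ 2)) (c : Fin (d ^ 2) → ℂ)
    (hrel : ∀ i, M i * G = c i • M (k i))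
    (i1 : Fin (d ^ 2)) (hM1 : IsUnit (M i1)) (hG : G ≠ 0) : IsUnit G := by
  have hcomp := locu_completeness M horth
  have : Nonempty (Fin (d^2)) := ⟨i1⟩
  -- coefficient computation
  have hcoef : ∀ l, ((M l)ᴴ * (M i1 * Gᴴ)).trace
      = star (c l) * (if k l = i1 then 1 else 0) := by
    intro l
    have h1 : (M l)ᴴ * (M i1 * Gᴴ) = ((M l)ᴴ * M i1) * Gᴴ := (Matrix.mul_assoc _ _ _).symm
    rw [h1, Matrix.trace_mul_comm]
    have h2 : Gᴴ * ((M l)ᴴ * M i1) = (M l * G)ᴴ * M i1 := by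
      rw [Matrix.conjTranspose_mul, Matrix.mul_assoc]
    rw [h2, hrel l, Matrix.conjTranspose_smul, Matrix.smul_mul, Matrix.trace_smul, horth]
    simp
  have hexp : M i1 * Gᴴ = ∑ l, (star (c l) * (if k l = i1 then 1 else 0)) • M l := by
    conv_lhs => rw [← locu_reconstruct hcomp (M i1 * Gᴴ)]
    exact Finset.sum_congr rfl fun l _ => by rw [hcoef l]
  set s : ℂ := ∑ l, if k l = i1 then star (c l) * c l else 0 with hs
  have heig : M i1 * (Gᴴ * G) = s • M i1 := by
    rw [← Matrix.mul_assoc, hexp, Finset.sum_mul, hs, Finset.sum_smul]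
    refine Finset.sum_congr rfl fun l _ => ?_
    rw [Matrix.smul_mul, hrel l, smul_smul]
    by_cases hk : k l = i1
    · rw [if_pos hk, if_pos hk, hk, mul_one]
    · rw [if_neg hk, if_neg hk, mul_zero, zero_mul, zero_smul, zero_smul]
  have hGG : Gᴴ * G = s • 1 := by
    have h3 : M i1 * (s • (1 : locu_Mat d)) = s • M i1 := by
      rw [Matrix.mul_smul, Matrix.mul_one]
    exact hM1.mul_right_injective (heig.trans h3.symm)
  have hs0 : s ≠ 0 := by
    intro h0
    rw [h0, zero_smul] at hGG
    exact hG (locu_norm_zero (by rw [hGG, Matrix.trace_zero]))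
  rw [Matrix.isUnit_iff_isUnit_det G, isUnit_iff_ne_zero]
  intro hdet
  have : (Gᴴ * G).det = 0 := by rw [Matrix.det_mul, hdet, mul_zero]
  rw [hGG, Matrix.det_smul, Matrix.det_one, mul_one] at this
  exact hs0 (pow_eq_zero_iff' .. |>.mp this).1



lemma locu_tr_star (C D : locu_Mat d) : star ((Cᴴ * D).trace) = (Dᴴ * C).trace := by
  rw [← Matrix.trace_conjTranspose, Matrix.conjTranspose_mul, Matrix.conjTranspose_conjTranspose]

lemma locu_isUnit_pair {P Q : locu_Mat d} (h : IsUnit (P * Q)) : IsUnit P ∧ IsUnit Q := by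
  have h1 := (Matrix.isUnit_iff_isUnit_det _).mp h
  rw [Matrix.det_mul] at h1
  exact ⟨(Matrix.isUnit_iff_isUnit_det _).mpr (isUnit_of_mul_isUnit_left h1),
    (Matrix.isUnit_iff_isUnit_det _).mpr
      (isUnit_of_mul_isUnit_left (by rwa [mul_comm] at h1))⟩

lemma locu_cancel_right {U C D : locu_Mat d} (hU : IsUnit U) (h : C * U = D * U) : C = D := by
  have hdet := (Matrix.isUnit_iff_isUnit_det U).mp hU
  have h2 := congrArg (fun Z => Z * U⁻¹) h
  simpa [Matrix.mul_assoc, Matrix.mul_nonsing_inv U hdet] using h2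

lemma locu_cancel_left {U C D : locu_Mat d} (hU : IsUnit U) (h : U * C = U * D) : C = D := by
  have hdet := (Matrix.isUnit_iff_isUnit_det U).mp hU
  have h2 := congrArg (fun Z => U⁻¹ * Z) h
  simpa [← Matrix.mul_assoc, Matrix.nonsing_inv_mul U hdet] using h2

lemma locu_card_ge {X : Type} [Fintype X] (A : X → locu_Mat d) (hA : ∑ a, dop (A a) = 1) :
    d ^ 2 ≤ Fintype.card X := by
  classical
  let Φ : locu_Mat d →ₗ[ℂ] (X → ℂ) :=
    { toFun := fun C a => ((A a)ᴴ * C).trace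
      map_add' := by intro C D; funext a; simp [Matrix.mul_add]
      map_smul' := by intro r C; funext a; simp [Matrix.mul_smul] }
  have hinj : Function.Injective Φ := by
    rw [injective_iff_map_eq_zero]
    intro C hC
    refine locu_norm_zero ?_
    rw [← locu_parseval hA C C]
    refine Finset.sum_eq_zero fun a _ => ?_
    have : ((A a)ᴴ * C).trace = 0 := congrFun hC a
    rw [this, mul_zero]
  have hle := LinearMap.finrank_le_finrank_of_injective hinj
  rw [Module.finrank_fintype_fun_eq_card] at hle
  rw [Module.finrank_matrix] at hle
  simpa [pow_two] using hle


end LocuHelpers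

/-- For a rank-1 non-redundant localization `(R, {A_a}, {B_b}, f)` of a rank-1 non-redundant
PVM `{|Mᵢ⟩⟩⟨⟨Mᵢ|}` on `ℂ^d ⊗ ℂ^d` containing a full-rank element, with an entangled pure
resource state `R`: the local POVMs must be PVMs (`|X| = |Y| = d²`), all `Mᵢ`, `A_a`, `B_b`
must be full-rank, and the pattern function `f` forms a Latin square. -/
theorem localization_fullrank_latin {d : ℕ} (hd : 0 < d)
    {X Y : Type} [Fintype X] [Fintype Y]
    (M : Fin (d ^ 2) → Matrix (Fin d) (Fin d) ℂ)
    (A : X → Matrix (Fin d) (Fin d) ℂ) (B : Y → Matrix (Fin d) (Fin d) ℂ)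
    (R : Matrix (Fin d) (Fin d) ℂ)
    (f : X → Y → Fin (d ^ 2))
    -- `{|Mᵢ⟩⟩⟨⟨Mᵢ|}` is a rank-1 PVM: the double-kets are orthonormal
    (horthM : ∀ i j, ((M i)ᴴ * M j).trace = if i = j then 1 else 0)
    -- at least one element of the PVM is full-rank
    (hfull : ∃ i, IsUnit (M i))
    -- `R` is an entangled pure state (unit norm, Schmidt rank at least 2)
    (hR : (Rᴴ * R).trace = 1) (hRent : 1 < R.rank)
    -- `{|A_a⟩⟩⟨⟨A_a|}` and `{|B_b⟩⟩⟨⟨B_b|}` are rank-1 non-redundant POVMs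
    (hA : ∑ a, dop (A a) = 1) (hB : ∑ b, dop (B b) = 1)
    (hA1 : ∀ a, A a ≠ 0) (hB1 : ∀ b, B b ≠ 0)
    (hAnr : ∀ a a', (∃ α : ℂ, A a = α • A a') → a = a')
    (hBnr : ∀ b b', (∃ α : ℂ, B b = α • B b') → b = b')
    -- the localization condition `A_a R* B_b ∝ M_{f(a,b)}`
    (hloc : ∀ a b, ∃ α : ℂ, A a * R.map star * B b = α • M (f a b)) :
    Fintype.card X = d ^ 2 ∧ Fintype.card Y = d ^ 2 ∧
    (∀ i, IsUnit (M i)) ∧ (∀ a, IsUnit (A a)) ∧ (∀ b, IsUnit (B b)) ∧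
    (∀ a, Function.Injective (f a)) ∧ (∀ b, Function.Injective fun a => f a b) := by
  classical
  obtain ⟨i0, hM0⟩ := hfull
  set S : Matrix (Fin d) (Fin d) ℂ := R.map star with hSdef
  have hMnorm : ∀ i, ((M i)ᴴ * M i).trace = 1 := fun i => by simpa using horthM i i
  have hMne : ∀ i, M i ≠ 0 := by
    intro i h
    have := hMnorm i
    rw [h] at this
    simp at this
  -- trace of S
  have htrS : (Sᴴ * S).trace = 1 := by
    rw [locu_tr_form] at hR ⊢
    rw [← hR]
    refine Finset.sum_congr rfl fun p _ => ?_
    simp [hSdef, Matrix.map_apply, mul_comm]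
  -- the total weight identity
  have hsum : ∑ a, ∑ b, ((M i0)ᴴ * (A a * S * B b)).trace
      * star (((M i0)ᴴ * (A a * S * B b)).trace) = 1 := by
    have inner : ∀ a, (∑ b, ((M i0)ᴴ * (A a * S * B b)).trace
        * star (((M i0)ᴴ * (A a * S * B b)).trace))
        = ((Sᴴ * (A a)ᴴ * M i0)ᴴ * (Sᴴ * (A a)ᴴ * M i0)).trace := by
      intro a
      set Da : Matrix (Fin d) (Fin d) ℂ := Sᴴ * (A a)ᴴ * M i0 with hDa
      have hT : ∀ b, ((M i0)ᴴ * (A a * S * B b)).trace = (Daᴴ * B b).trace := by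
        intro b
        congr 1
        simp [hDa, Matrix.conjTranspose_mul, Matrix.mul_assoc]
      rw [← locu_parseval hB Da Da]
      refine Finset.sum_congr rfl fun b _ => ?_
      rw [hT b, locu_tr_star Da (B b)]
    simp only [inner]
    have step1 : ∀ a : X, (Sᴴ * (A a)ᴴ * M i0)ᴴ * (Sᴴ * (A a)ᴴ * M i0)
        = (M i0)ᴴ * ((A a * (S * Sᴴ) * (A a)ᴴ) * M i0) := by
      intro a
      simp [Matrix.conjTranspose_mul, Matrix.mul_assoc]
    simp only [step1]
    have step2 : ∑ a : X, (M i0)ᴴ * ((A a * (S * Sᴴ) * (A a)ᴴ) * M i0)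
        = (M i0)ᴴ * (((S * Sᴴ).trace • (1 : Matrix (Fin d) (Fin d) ℂ)) * M i0) := by
      rw [← locu_channel hA (S * Sᴴ)]
      simp only [← Finset.sum_mul, ← Finset.mul_sum]
    rw [← Matrix.trace_sum, step2, Matrix.smul_mul, Matrix.one_mul, Matrix.mul_smul,
      Matrix.trace_smul, hMnorm i0, smul_eq_mul, mul_one, Matrix.trace_mul_comm, htrS]
  -- find the full-rank localization pair
  have hex : ∃ a b, ((M i0)ᴴ * (A a * S * B b)).trace ≠ 0 := by
    by_contra hcon
    push_neg at hcon
    rw [Finset.sum_eq_zero (fun a _ => Finset.sum_eq_zero fun b _ => by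
      rw [hcon a b, zero_mul])] at hsum
    exact zero_ne_one hsum
  obtain ⟨a0, b0, hT0⟩ := hex
  obtain ⟨α0, heq0⟩ := hloc a0 b0
  have hf0 : f a0 b0 = i0 := by
    by_contra hne
    apply hT0
    rw [heq0, Matrix.mul_smul, Matrix.trace_smul, horthM i0 (f a0 b0),
      if_neg (fun h : i0 = f a0 b0 => hne h.symm), smul_eq_mul, mul_zero]
  have hα0 : α0 ≠ 0 := by
    intro h0
    rw [heq0, h0, zero_smul, Matrix.mul_zero, Matrix.trace_zero] at hT0
    exact hT0 rfl
  rw [hf0] at heq0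
  -- invertibility of the chosen triple
  have hP0u : IsUnit (A a0 * S * B b0) := locu_isUnit_of_smul_unit hα0 heq0 hM0
  obtain ⟨hASu, hBb0u⟩ := locu_isUnit_pair hP0u
  obtain ⟨hAa0u, hSu⟩ := locu_isUnit_pair hASu
  have hXmu : IsUnit (S * B b0) := hSu.mul hBb0u
  -- the A side scalars
  have hαA : ∀ a, ∃ α : ℂ, α ≠ 0 ∧ A a * (S * B b0) = α • M (f a b0) := by
    intro a
    obtain ⟨α, hα⟩ := hloc a b0
    refine ⟨α, fun h0 => ?_, by rw [← Matrix.mul_assoc]; exact hα⟩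
    rw [h0, zero_smul] at hα
    refine hA1 a (locu_cancel_right hXmu ?_)
    rw [Matrix.zero_mul, ← Matrix.mul_assoc]
    exact hα
  choose αA hαA0 hαAeq using hαA
  -- injectivity of a ↦ f a b0
  have hσinj : Function.Injective (fun a => f a b0) := by
    intro a a' h
    simp only at h
    refine hAnr a a' ⟨αA a * (αA a')⁻¹, ?_⟩
    refine locu_cancel_right hXmu ?_
    rw [hαAeq a, h, Matrix.smul_mul, hαAeq a', smul_smul,
      mul_assoc, inv_mul_cancel₀ (hαA0 a'), mul_one]
  -- the B side scalars
  have hYmu : IsUnit (A a0 * S) := hAa0u.mul hSu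
  have hαB : ∀ b, ∃ β : ℂ, β ≠ 0 ∧ (A a0 * S) * B b = β • M (f a0 b) := by
    intro b
    obtain ⟨β, hβ⟩ := hloc a0 b
    refine ⟨β, fun h0 => ?_, hβ⟩
    rw [h0, zero_smul] at hβ
    exact hB1 b (locu_cancel_left hYmu (by rw [Matrix.mul_zero]; exact hβ))
  choose βB hβB0 hβBeq using hαB
  have hτinj : Function.Injective (f a0) := by
    intro b b' h
    refine hBnr b b' ⟨βB b * (βB b')⁻¹, ?_⟩
    refine locu_cancel_left hYmu ?_
    rw [hβBeq b, h, Matrix.mul_smul, hβBeq b', smul_smul,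
      mul_assoc, inv_mul_cancel₀ (hβB0 b'), mul_one]
  -- cardinalities
  have hcardX : Fintype.card X = d ^ 2 := by
    refine le_antisymm ?_ (locu_card_ge A hA)
    simpa using Fintype.card_le_of_injective _ hσinj
  have hcardY : Fintype.card Y = d ^ 2 := by
    refine le_antisymm ?_ (locu_card_ge B hB)
    simpa using Fintype.card_le_of_injective _ hτinj
  have hσsurj : Function.Surjective (fun a => f a b0) :=
    ((Fintype.bijective_iff_injective_and_card _).mpr ⟨hσinj, by simp [hcardX]⟩).surjective
  have hτsurj : Function.Surjective (f a0) :=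
    ((Fintype.bijective_iff_injective_and_card _).mpr ⟨hτinj, by simp [hcardY]⟩).surjective
  -- all PVM elements are invertible
  have hdetP0 : IsUnit (A a0 * S * B b0).det := (Matrix.isUnit_iff_isUnit_det _).mp hP0u
  have hdetBb0 : IsUnit (B b0).det := (Matrix.isUnit_iff_isUnit_det _).mp hBb0u
  have hdetYm : IsUnit (A a0 * S).det := (Matrix.isUnit_iff_isUnit_det _).mp hYmu
  have hMall : ∀ j, IsUnit (M j) := by
    intro j
    obtain ⟨b1, hb1⟩ := hτsurj j
    set G : Matrix (Fin d) (Fin d) ℂ := (B b0)⁻¹ * B b1 with hGdef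
    -- P0 * G = Q, where Q = A a0 * S * B b1
    have hQ : (A a0 * S * B b0) * G = A a0 * S * B b1 := by
      rw [hGdef, Matrix.mul_assoc (A a0 * S) (B b0) _, ← Matrix.mul_assoc (B b0) _ _,
        Matrix.mul_nonsing_inv _ hdetBb0, Matrix.one_mul]
    have hG0 : G ≠ 0 := by
      intro h0
      rw [h0, Matrix.mul_zero] at hQ
      have := hβBeq b1
      rw [← hQ, hb1] at this
      exact hMne j (by
        have := this.symm
        rw [smul_eq_zero] at this
        exact this.resolve_left (hβB0 b1))
    -- the multiplicative relation for every PVM element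
    have hrel : ∀ i, ∃ (kk : Fin (d ^ 2)) (cc : ℂ), M i * G = cc • M kk := by
      intro i
      obtain ⟨a, ha⟩ := hσsurj i
      simp only at ha
      obtain ⟨γ, hγ⟩ := hloc a b1
      refine ⟨f a b1, (αA a)⁻¹ * γ, ?_⟩
      have hMi : M i = (αA a)⁻¹ • (A a * (S * B b0)) := by
        rw [hαAeq a, ha, smul_smul, inv_mul_cancel₀ (hαA0 a), one_smul]
      rw [hMi, Matrix.smul_mul, Matrix.mul_assoc]
      have hmid : S * B b0 * G = S * B b1 := by
        rw [hGdef, Matrix.mul_assoc S (B b0) _, ← Matrix.mul_assoc (B b0) _ _,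
          Matrix.mul_nonsing_inv _ hdetBb0, Matrix.one_mul]
      rw [hmid, ← Matrix.mul_assoc, hγ, smul_smul]
    choose kk cc hkc using hrel
    have hGu : IsUnit G := locu_key M horthM G kk cc hkc i0 hM0 hG0
    have hQu : IsUnit (A a0 * S * B b1) := by
      rw [← hQ]
      exact hP0u.mul hGu
    have := hβBeq b1
    rw [hb1] at this
    exact (locu_unit_of_smul hd this hQu).1
  -- all A's and B's are invertible
  have hAall : ∀ a, IsUnit (A a) := by
    intro a
    have hu : IsUnit (A a * (S * B b0)) :=
      locu_isUnit_of_smul_unit (hαA0 a) (hαAeq a) (hMall (f a b0))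
    exact (locu_isUnit_pair hu).1
  have hBall : ∀ b, IsUnit (B b) := by
    intro b
    have hu : IsUnit ((A a0 * S) * B b) :=
      locu_isUnit_of_smul_unit (hβB0 b) (hβBeq b) (hMall (f a0 b))
    exact (locu_isUnit_pair hu).2
  -- Latin square property
  have hrow : ∀ a, Function.Injective (f a) := by
    intro a b b' h
    obtain ⟨α, hα⟩ := hloc a b
    obtain ⟨α', hα'⟩ := hloc a b'
    have hu : IsUnit (A a * S * B b) := ((hAall a).mul hSu).mul (hBall b)
    have hu' : IsUnit (A a * S * B b') := ((hAall a).mul hSu).mul (hBall b')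
    have hα0' : α' ≠ 0 := (locu_unit_of_smul hd hα' hu').2
    refine hBnr b b' ⟨α * α'⁻¹, ?_⟩
    refine locu_cancel_left ((hAall a).mul hSu) ?_
    rw [Matrix.mul_smul]
    have h1 : (A a * S) * B b = α • M (f a b) := hα
    have h2 : (A a * S) * B b' = α' • M (f a b') := hα'
    rw [h1, h2, smul_smul, h, mul_assoc, inv_mul_cancel₀ hα0', mul_one]
  have hcol : ∀ b, Function.Injective fun a => f a b := by
    intro b a a' h
    simp only at h
    obtain ⟨α, hα⟩ := hloc a b
    obtain ⟨α', hα'⟩ := hloc a' b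
    have hu' : IsUnit (A a' * S * B b) := ((hAall a').mul hSu).mul (hBall b)
    have hα0' : α' ≠ 0 := (locu_unit_of_smul hd hα' hu').2
    refine hAnr a a' ⟨α * α'⁻¹, ?_⟩
    refine locu_cancel_right (hSu.mul (hBall b)) ?_
    rw [Matrix.smul_mul]
    have h1 : A a * (S * B b) = α • M (f a b) := by rw [← Matrix.mul_assoc]; exact hα
    have h2 : A a' * (S * B b) = α' • M (f a' b) := by rw [← Matrix.mul_assoc]; exact hα'
    rw [h1, h2, smul_smul, h, mul_assoc, inv_mul_cancel₀ hα0', mul_one]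
  exact ⟨hcardX, hcardY, hMall, hAall, hBall, hrow, hcol⟩
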